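/- In the case ξ = 0: for every k ∈ ℕ and every σ > 0, p_DGPD(k; σ, 0)/f_GPD(k; σ, 0) = p_GZD(k; σ, 0)/f_GPD(k; σ, 0) = σ(1 − e^{−1/σ}), and σ(1 − e^{−1/σ}) → 1 as σ → ∞; consequently sup_{k ∈ ℕ} | p_DGPD(k; σ, 0)/f_GPD(k; σ, 0) − 1 | → 0 and sup_{k ∈ ℕ} | p_DGPD(k; σ, 0)/p_GZD(k; σ, 0) − 1 | → 0 as σ → ∞. -/

import Mathlib

/-- GPD density with `ξ = 0`: `f_GPD(x; σ, 0) = σ⁻¹ e^(-x/σ)`. -/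
noncomputable def fGPD0 (σ x : ℝ) : ℝ := σ⁻¹ * Real.exp (-x / σ)

/-- D-GPD probability mass function with `ξ = 0`:
`p_DGPD(k; σ, 0) = e^(-k/σ) - e^(-(k+1)/σ)`. -/
noncomputable def pDGPD0 (σ : ℝ) (k : ℕ) : ℝ :=
  Real.exp (-(k : ℝ) / σ) - Real.exp (-((k : ℝ) + 1) / σ)

/-- Generalized Zipf probability mass function with `ξ = 0` (geometric):
`p_GZD(k; σ, 0) = (1 - e^(-1/σ)) e^(-k/σ)`. -/
noncomputable def pGZD0 (σ : ℝ) (k : ℕ) : ℝ :=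
  (1 - Real.exp (-1 / σ)) * Real.exp (-(k : ℝ) / σ)

lemma dgpd_eq_gzd (σ : ℝ) (k : ℕ) : pDGPD0 σ k = pGZD0 σ k := by
  unfold pDGPD0 pGZD0
  rw [show -((k:ℝ)+1)/σ = -1/σ + -(k:ℝ)/σ by ring, Real.exp_add]
  ring

lemma gzd_div_f (σ : ℝ) (hσ : 0 < σ) (k : ℕ) :
    pGZD0 σ k / fGPD0 σ k = σ * (1 - Real.exp (-1 / σ)) := by
  unfold pGZD0 fGPD0
  have h := Real.exp_ne_zero (-(k:ℝ)/σ)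
  field_simp

lemma tendsto_main :
    Filter.Tendsto (fun σ : ℝ => σ * (1 - Real.exp (-1 / σ))) Filter.atTop (nhds 1) := by
  have hd : HasDerivAt (fun t : ℝ => Real.exp (-t)) (-1) 0 := by
    have h := (Real.hasDerivAt_exp (-0)).comp 0 (hasDerivAt_neg 0)
    simp only [neg_zero, Real.exp_zero, one_mul] at h
    exact h
  have hs := hasDerivAt_iff_tendsto_slope.mp hd
  have hinv : Filter.Tendsto (fun σ : ℝ => σ⁻¹) Filter.atTop (nhdsWithin 0 {(0:ℝ)}ᶜ) := by
    apply tendsto_nhdsWithin_of_tendsto_nhds_of_eventually_within _ tendsto_inv_atTop_zero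
    filter_upwards [Filter.eventually_ge_atTop (1:ℝ)] with σ hσ
    simp only [Set.mem_compl_iff, Set.mem_singleton_iff]
    positivity
  have hcomp := hs.comp hinv
  have : Filter.Tendsto (fun σ : ℝ => -(slope (fun t : ℝ => Real.exp (-t)) 0 σ⁻¹))
      Filter.atTop (nhds 1) := by
    simpa using hcomp.neg
  refine this.congr' ?_
  filter_upwards [Filter.eventually_ge_atTop (1:ℝ)] with σ hσ
  have hσ0 : σ ≠ 0 := by positivity
  rw [slope_def_field]
  field_simp
  rw [neg_zero, Real.exp_zero]
  ring

/-- In the case `ξ = 0`: for every `k ∈ ℕ` and `σ > 0`,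
`p_DGPD(k;σ,0)/f_GPD(k;σ,0) = p_GZD(k;σ,0)/f_GPD(k;σ,0) = σ(1 - e^(-1/σ))`, which tends
to `1` as `σ → ∞`; consequently `sup_{k} |p_DGPD(k;σ,0)/f_GPD(k;σ,0) - 1| → 0` and
`sup_{k} |p_DGPD(k;σ,0)/p_GZD(k;σ,0) - 1| → 0` as `σ → ∞`. -/
theorem xi_zero_ratios_tendsto_one :
    (∀ σ > (0:ℝ), ∀ k : ℕ,
      pDGPD0 σ k / fGPD0 σ k = σ * (1 - Real.exp (-1 / σ)) ∧
      pGZD0 σ k / fGPD0 σ k = σ * (1 - Real.exp (-1 / σ))) ∧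
    Filter.Tendsto (fun σ : ℝ => σ * (1 - Real.exp (-1 / σ))) Filter.atTop (nhds 1) ∧
    (∀ ε > (0:ℝ), ∃ S : ℝ, ∀ σ ≥ S, ∀ k : ℕ,
      |pDGPD0 σ k / fGPD0 σ k - 1| ≤ ε) ∧
    (∀ ε > (0:ℝ), ∃ S : ℝ, ∀ σ ≥ S, ∀ k : ℕ,
      |pDGPD0 σ k / pGZD0 σ k - 1| ≤ ε) := by
  refine ⟨fun σ hσ k => ⟨by rw [dgpd_eq_gzd]; exact gzd_div_f σ hσ k, gzd_div_f σ hσ k⟩,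
    tendsto_main, ?_, ?_⟩
  · intro ε hε
    have h := (tendsto_main.eventually (Metric.closedBall_mem_nhds (1:ℝ) hε)).and
      (Filter.eventually_ge_atTop (1:ℝ))
    obtain ⟨S, hS⟩ := h.exists_forall_of_atTop
    refine ⟨max S 1, fun σ hσ k => ?_⟩
    obtain ⟨h1, h2⟩ := hS σ (le_trans (le_max_left _ _) hσ)
    have hσ0 : (0:ℝ) < σ := lt_of_lt_of_le one_pos h2
    rw [dgpd_eq_gzd, gzd_div_f σ hσ0 k]
    simpa [Real.dist_eq] using h1
  · intro ε hε
    refine ⟨1, fun σ hσ k => ?_⟩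
    have hσ0 : (0:ℝ) < σ := lt_of_lt_of_le one_pos hσ
    have hne : pGZD0 σ k ≠ 0 := by
      unfold pGZD0
      have h1 : Real.exp (-1/σ) < 1 := by
        rw [Real.exp_lt_one_iff, neg_div, neg_lt_zero]
        positivity
      exact ne_of_gt (mul_pos (by linarith) (Real.exp_pos _))
    rw [dgpd_eq_gzd, div_self hne]
    simpa using le_of_lt hε
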